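/- Let Z and Z̄ be real T×K matrices with Zᵀ Z and Z̄ᵀ Z̄ positive definite, and let Z = U H and Z̄ = Ū H̄ be polar decompositions, i.e., Uᵀ U = Ūᵀ Ū = I_K and H, H̄ are symmetric positive definite K×K matrices. Then ‖U − Ū‖_F ≤ ‖Z − Z̄‖_F / min(σ_min(Z), σ_min(Z̄)), where σ_min(A) := sqrt(minEig(Aᵀ A)) is the smallest singular value. -/

import Mathlib

open Matrix

/-- The smallest eigenvalue of a real symmetric (Hermitian) matrix. -/
noncomputable def minEig {n : Type*} [Fintype n] [DecidableEq n]
    (A : Matrix n n ℝ) (hA : A.IsHermitian) : ℝ :=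
  ⨅ i, hA.eigenvalues i

/-- The Frobenius norm of a real matrix. -/
noncomputable def frobNorm {m n : Type*} [Fintype m] [Fintype n] (A : Matrix m n ℝ) : ℝ :=
  Real.sqrt (∑ i, ∑ j, (A i j) ^ 2)

/-- The smallest singular value `σ_min(A) = sqrt(minEig(Aᵀ A))` of a real matrix. -/
noncomputable def sigmaMin {T K : ℕ} (A : Matrix (Fin T) (Fin K) ℝ) : ℝ :=
  Real.sqrt (minEig (Aᵀ * A) (by simpa using Matrix.isHermitian_conjTranspose_mul_self A))

section Helpers

variable {m n : Type*} [Fintype m] [Fintype n] [DecidableEq n]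

lemma trace_transpose_mul_self_eq (A : Matrix m n ℝ) :
    trace (Aᵀ * A) = ∑ i, ∑ j, (A i j) ^ 2 := by
  rw [Finset.sum_comm]
  simp [trace, Matrix.mul_apply, Matrix.diag, sq]

lemma trace_transpose_mul_self_nonneg (A : Matrix m n ℝ) : 0 ≤ trace (Aᵀ * A) := by
  rw [trace_transpose_mul_self_eq]; positivity

lemma frobNorm_eq_sqrt_trace (A : Matrix m n ℝ) :
    frobNorm A = Real.sqrt (trace (Aᵀ * A)) := by
  rw [frobNorm, trace_transpose_mul_self_eq]

/-- Cauchy–Schwarz for the Frobenius inner product. -/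
lemma trace_transpose_mul_le (A B : Matrix m n ℝ) :
    trace (Aᵀ * B) ≤ Real.sqrt (trace (Aᵀ * A)) * Real.sqrt (trace (Bᵀ * B)) := by
  have h1 : trace (Aᵀ * B) = ∑ p : n × m, A p.2 p.1 * B p.2 p.1 := by
    rw [Fintype.sum_prod_type]
    simp [trace, Matrix.mul_apply, Matrix.diag]
  have h2 : trace (Aᵀ * A) = ∑ p : n × m, (A p.2 p.1) ^ 2 := by
    rw [Fintype.sum_prod_type, trace_transpose_mul_self_eq, Finset.sum_comm]
  have h3 : trace (Bᵀ * B) = ∑ p : n × m, (B p.2 p.1) ^ 2 := by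
    rw [Fintype.sum_prod_type, trace_transpose_mul_self_eq, Finset.sum_comm]
  have hcs := Finset.sum_mul_sq_le_sq_mul_sq Finset.univ (fun p : n × m => A p.2 p.1)
    (fun p : n × m => B p.2 p.1)
  rw [h1, h2, h3]
  calc ∑ p : n × m, A p.2 p.1 * B p.2 p.1
      ≤ |∑ p : n × m, A p.2 p.1 * B p.2 p.1| := le_abs_self _
    _ = Real.sqrt ((∑ p : n × m, A p.2 p.1 * B p.2 p.1) ^ 2) := (Real.sqrt_sq_eq_abs _).symm
    _ ≤ Real.sqrt ((∑ p : n × m, (A p.2 p.1)^2) * (∑ p : n × m, (B p.2 p.1)^2)) :=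
        Real.sqrt_le_sqrt hcs
    _ = _ := Real.sqrt_mul (by positivity) _

lemma trace_psd_nonneg {M : Matrix n n ℝ} (hM : M.PosSemidef) : 0 ≤ trace M := by
  exact hM.trace_nonneg

lemma trace_mul_psd_nonneg {A B : Matrix n n ℝ} (hA : A.PosSemidef) (hB : B.PosSemidef) :
    0 ≤ trace (A * B) := by
  open scoped MatrixOrder in
  have key : trace (A * B) = trace (CFC.sqrt B * A * (CFC.sqrt B)ᴴ) := by
    rw [(CFC.sqrt_nonneg B).posSemidef.1]
    conv_lhs => rw [← CFC.sqrt_mul_sqrt_self B hB.nonneg]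
    rw [← Matrix.mul_assoc, trace_mul_comm, ← Matrix.mul_assoc]
  rw [key]
  exact trace_psd_nonneg (hA.mul_mul_conjTranspose_same _)

lemma minEig_le {A : Matrix n n ℝ} (hA : A.IsHermitian) (i : n) :
    minEig A hA ≤ hA.eigenvalues i :=
  ciInf_le (Set.Finite.bddBelow (Set.finite_range _)) i

lemma minEig_pos [Nonempty n] {A : Matrix n n ℝ} (hA : A.PosDef) : 0 < minEig A hA.1 := by
  obtain ⟨i, hi⟩ := Finite.exists_min hA.1.eigenvalues
  exact lt_of_lt_of_le (hA.eigenvalues_pos i) (le_ciInf hi)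

/-- `A - minEig A • 1` is positive semidefinite. -/
lemma sub_minEig_smul_one_posSemidef {A : Matrix n n ℝ} (hA : A.IsHermitian) :
    (A - minEig A hA • 1).PosSemidef := by
  have hW := (Matrix.mem_unitaryGroup_iff).mp hA.eigenvectorUnitary.2
  set W : Matrix n n ℝ := (hA.eigenvectorUnitary : Matrix n n ℝ) with hWdef
  have key : A - minEig A hA • 1 =
      W * diagonal (fun i => hA.eigenvalues i - minEig A hA) * star W := by
    have hd : diagonal (fun i => hA.eigenvalues i - minEig A hA)
        = diagonal (RCLike.ofReal ∘ hA.eigenvalues) - minEig A hA • 1 := by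
      rw [Matrix.smul_one_eq_diagonal, ← Matrix.diagonal_sub]
      rfl
    have hspec : A = W * diagonal (RCLike.ofReal ∘ hA.eigenvalues) * star W :=
      hA.spectral_theorem
    rw [hd, Matrix.mul_sub, Matrix.sub_mul, ← hspec]
    congr 1
    rw [Matrix.mul_smul, Matrix.smul_mul, Matrix.mul_one, hW]
  rw [key, Matrix.star_eq_conjTranspose W]
  refine (Matrix.posSemidef_diagonal_iff.mpr ?_).mul_mul_conjTranspose_same W
  intro i
  simpa using minEig_le hA i

/-- Trace lower bound: `lam * trace M ≤ trace (A * M)` when `A - lam•1 ⪰ 0` and `M ⪰ 0`. -/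
lemma le_trace_mul {A M : Matrix n n ℝ} {lam : ℝ} (hAl : (A - lam • 1).PosSemidef)
    (hM : M.PosSemidef) : lam * trace M ≤ trace (A * M) := by
  have h := trace_mul_psd_nonneg hAl hM
  rw [Matrix.sub_mul, trace_sub, Matrix.smul_mul, Matrix.one_mul, trace_smul] at h
  simpa using sub_nonneg.mp h

/-- If `H ≻ 0` and `H*H - lam^2 ⪰ 0` with `lam ≥ 0`, then `H - lam•1 ⪰ 0`. -/
lemma posSemidef_sub_of_sq [Nonempty n] {H : Matrix n n ℝ} (hH : H.PosDef) {lam : ℝ}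
    (hlam : 0 ≤ lam) (hsq : (H * H - (lam ^ 2) • 1).PosSemidef) :
    (H - lam • 1).PosSemidef := by
  have hmu : lam ≤ minEig H hH.1 := by
    refine le_ciInf fun i => ?_
    set v : n → ℝ := ⇑(hH.1.eigenvectorBasis i) with hv
    have hev : H *ᵥ v = hH.1.eigenvalues i • v := hH.1.mulVec_eigenvectorBasis i
    have hvne : v ≠ 0 := by
      have := hH.1.eigenvectorBasis.orthonormal.ne_zero i
      intro h
      apply this
      ext j
      exact congrFun h j
    have hvv : 0 < dotProduct v v := by
      have := Matrix.dotProduct_self_star_pos_iff (R := ℝ) (n := n) (v := v)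
      simpa using this.mpr hvne
    have h0 := hsq.dotProduct_mulVec_nonneg v
    have hH2v : (H * H - (lam ^ 2) • 1) *ᵥ v
        = (hH.1.eigenvalues i ^ 2 - lam ^ 2) • v := by
      rw [Matrix.sub_mulVec, ← Matrix.mulVec_mulVec, hev, Matrix.mulVec_smul, hev,
        smul_smul, Matrix.smul_mulVec, Matrix.one_mulVec, sub_smul, sq, sq]
    rw [hH2v] at h0
    simp only [star_trivial, dotProduct_smul, smul_eq_mul] at h0
    have hsq_le : lam ^ 2 ≤ hH.1.eigenvalues i ^ 2 := by nlinarith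
    have hei : 0 < hH.1.eigenvalues i := hH.eigenvalues_pos i
    nlinarith
  have h1 : (H - minEig H hH.1 • 1).PosSemidef := sub_minEig_smul_one_posSemidef hH.1
  have h2 : ((minEig H hH.1 - lam) • (1 : Matrix n n ℝ)).PosSemidef := by
    rw [Matrix.smul_one_eq_diagonal]
    exact Matrix.PosSemidef.diagonal (fun i => by simpa using sub_nonneg.mpr hmu)
  have key : H - lam • 1 = (H - minEig H hH.1 • 1) + (minEig H hH.1 - lam) • 1 := by
    rw [sub_smul]; abel
  rw [key]
  exact h1.add h2

end Helpers

lemma trace_mul_right_sq {T K : ℕ} (B : Matrix (Fin T) (Fin K) ℝ) (H : Matrix (Fin K) (Fin K) ℝ)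
    (hH : Hᵀ = H) : trace ((B * H)ᵀ * (B * H)) = trace ((H * H) * (Bᵀ * B)) := by
  rw [Matrix.transpose_mul, hH, ← Matrix.mul_assoc, trace_mul_comm]
  simp only [Matrix.mul_assoc]

set_option maxHeartbeats 1600000

/-- Polar-decomposition perturbation bound (Li 1993), used in Lemma 4: the orthonormal
polar factors satisfy `‖U − Ū‖_F ≤ ‖Z − Z̄‖_F / min(σ_min(Z), σ_min(Z̄))`. -/
theorem polar_factor_perturbation {T K : ℕ}
    (Z Zbar U Ubar : Matrix (Fin T) (Fin K) ℝ)
    (Hm Hbar : Matrix (Fin K) (Fin K) ℝ)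
    (hZ : (Zᵀ * Z).PosDef) (hZbar : (Zbarᵀ * Zbar).PosDef)
    (hU : Uᵀ * U = 1) (hUbar : Ubarᵀ * Ubar = 1)
    (hHm : Hm.PosDef) (hHbar : Hbar.PosDef)
    (hZdec : Z = U * Hm) (hZbardec : Zbar = Ubar * Hbar) :
    frobNorm (U - Ubar) ≤ frobNorm (Z - Zbar) / min (sigmaMin Z) (sigmaMin Zbar) := by
  rcases Nat.eq_zero_or_pos K with hK | hK
  · subst hK
    have hL : frobNorm (U - Ubar) = 0 := by simp [frobNorm]
    rw [hL]
    exact div_nonneg (Real.sqrt_nonneg _) (le_min (Real.sqrt_nonneg _) (Real.sqrt_nonneg _))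
  haveI : Nonempty (Fin K) := ⟨⟨0, hK⟩⟩
  have hsymm : Hmᵀ = Hm := by simpa using hHm.1.eq
  have hsymb : Hbarᵀ = Hbar := by simpa using hHbar.1.eq
  have hU' : ∀ {l : Type} (M : Matrix (Fin K) l ℝ), Uᵀ * (U * M) = M := by
    intro l M; rw [← Matrix.mul_assoc, hU, Matrix.one_mul]
  have hUb' : ∀ {l : Type} (M : Matrix (Fin K) l ℝ), Ubarᵀ * (Ubar * M) = M := by
    intro l M; rw [← Matrix.mul_assoc, hUbar, Matrix.one_mul]
  set lam := sigmaMin Z with hlamdef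
  set lamb := sigmaMin Zbar with hlambdef
  set mm := min lam lamb with hmmdef
  have lam_pos : 0 < lam := Real.sqrt_pos.mpr (minEig_pos hZ)
  have lamb_pos : 0 < lamb := Real.sqrt_pos.mpr (minEig_pos hZbar)
  have hmm_pos : 0 < mm := lt_min lam_pos lamb_pos
  have hm1 : mm ≤ lam := min_le_left _ _
  have hm2 : mm ≤ lamb := min_le_right _ _
  have hZZ : Zᵀ * Z = Hm * Hm := by
    rw [hZdec]
    simp only [Matrix.transpose_mul, hsymm, Matrix.mul_assoc, hU']
  have hZZb : Zbarᵀ * Zbar = Hbar * Hbar := by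
    rw [hZbardec]
    simp only [Matrix.transpose_mul, hsymb, Matrix.mul_assoc, hUb']
  have hlam_sq : lam ^ 2 = minEig (Zᵀ * Z) hZ.1 := Real.sq_sqrt (le_of_lt (minEig_pos hZ))
  have hlamb_sq : lamb ^ 2 = minEig (Zbarᵀ * Zbar) hZbar.1 :=
    Real.sq_sqrt (le_of_lt (minEig_pos hZbar))
  have hpsd1 : (Hm * Hm - lam ^ 2 • 1).PosSemidef := by
    rw [← hZZ, hlam_sq]; exact sub_minEig_smul_one_posSemidef hZ.1
  have hpsd1b : (Hbar * Hbar - lamb ^ 2 • 1).PosSemidef := by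
    rw [← hZZb, hlamb_sq]; exact sub_minEig_smul_one_posSemidef hZbar.1
  have hHmlam : (Hm - lam • 1).PosSemidef := posSemidef_sub_of_sq hHm lam_pos.le hpsd1
  have hHblam : (Hbar - lamb • 1).PosSemidef := posSemidef_sub_of_sq hHbar lamb_pos.le hpsd1b
  -- Sylvester identity
  have hSyl : Hm * (1 - Uᵀ * Ubar) + (1 - Uᵀ * Ubar) * Hbar
      = Uᵀ * (Z - Zbar) - (Z - Zbar)ᵀ * Ubar := by
    rw [hZdec, hZbardec]
    simp only [Matrix.transpose_mul, Matrix.transpose_sub, Matrix.transpose_one,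
      Matrix.transpose_transpose, Matrix.mul_sub, Matrix.sub_mul, Matrix.mul_one,
      Matrix.one_mul, hsymm, hsymb, Matrix.mul_assoc, hU, hUbar, hU', hUb']
    abel
  -- trace notation
  have hS0 : 0 ≤ trace ((1 - Uᵀ * Ubar)ᵀ * (1 - Uᵀ * Ubar)) := trace_transpose_mul_self_nonneg _
  have hE0 : 0 ≤ trace ((Z - Zbar)ᵀ * (Z - Zbar)) := trace_transpose_mul_self_nonneg _
  have hP0 : 0 ≤ trace ((((1 : Matrix (Fin T) (Fin T) ℝ) - U * Uᵀ) * Ubar)ᵀ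
      * (((1 : Matrix (Fin T) (Fin T) ℝ) - U * Uᵀ) * Ubar)) := trace_transpose_mul_self_nonneg _
  -- (f1) a = s + p
  have f1mat : (U - Ubar)ᵀ * (U - Ubar)
      = (1 - Uᵀ * Ubar)ᵀ * (1 - Uᵀ * Ubar)
        + (((1 : Matrix (Fin T) (Fin T) ℝ) - U * Uᵀ) * Ubar)ᵀ
          * (((1 : Matrix (Fin T) (Fin T) ℝ) - U * Uᵀ) * Ubar) := by
    simp only [Matrix.transpose_mul, Matrix.transpose_sub, Matrix.transpose_one,
      Matrix.transpose_transpose, Matrix.mul_sub, Matrix.sub_mul, Matrix.mul_one,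
      Matrix.one_mul, Matrix.mul_assoc, hU, hUbar, hU', hUb']
    abel
  have f1 : trace ((U - Ubar)ᵀ * (U - Ubar))
      = trace ((1 - Uᵀ * Ubar)ᵀ * (1 - Uᵀ * Ubar))
        + trace ((((1 : Matrix (Fin T) (Fin T) ℝ) - U * Uᵀ) * Ubar)ᵀ
          * (((1 : Matrix (Fin T) (Fin T) ℝ) - U * Uᵀ) * Ubar)) := by
    rw [f1mat, trace_add]
  -- (f2) Sylvester bound
  have hRS : (lam + lamb) * trace ((1 - Uᵀ * Ubar)ᵀ * (1 - Uᵀ * Ubar))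
      ≤ trace ((1 - Uᵀ * Ubar)ᵀ * (Uᵀ * (Z - Zbar) - (Z - Zbar)ᵀ * Ubar)) := by
    rw [← hSyl, Matrix.mul_add, trace_add]
    have t1 : trace ((1 - Uᵀ * Ubar)ᵀ * (Hm * (1 - Uᵀ * Ubar)))
        = trace (Hm * ((1 - Uᵀ * Ubar) * (1 - Uᵀ * Ubar)ᵀ)) := by
      rw [trace_mul_comm, Matrix.mul_assoc]
    have t2 : trace ((1 - Uᵀ * Ubar)ᵀ * ((1 - Uᵀ * Ubar) * Hbar))
        = trace (Hbar * ((1 - Uᵀ * Ubar)ᵀ * (1 - Uᵀ * Ubar))) := by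
      rw [← Matrix.mul_assoc, trace_mul_comm]
    have psd1 : ((1 - Uᵀ * Ubar) * (1 - Uᵀ * Ubar)ᵀ).PosSemidef := by
      have h := Matrix.posSemidef_self_mul_conjTranspose (1 - Uᵀ * Ubar)
      rwa [Matrix.conjTranspose_eq_transpose_of_trivial] at h
    have psd2 : ((1 - Uᵀ * Ubar)ᵀ * (1 - Uᵀ * Ubar)).PosSemidef := by
      have h := Matrix.posSemidef_conjTranspose_mul_self (1 - Uᵀ * Ubar)
      rwa [Matrix.conjTranspose_eq_transpose_of_trivial] at h
    have b1 := le_trace_mul hHmlam psd1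
    have b2 := le_trace_mul hHblam psd2
    have hcomm : trace ((1 - Uᵀ * Ubar) * (1 - Uᵀ * Ubar)ᵀ)
        = trace ((1 - Uᵀ * Ubar)ᵀ * (1 - Uᵀ * Ubar)) := trace_mul_comm _ _
    rw [t1, t2]
    rw [hcomm] at b1
    linarith
  have hCS : trace ((1 - Uᵀ * Ubar)ᵀ * (Uᵀ * (Z - Zbar) - (Z - Zbar)ᵀ * Ubar))
      ≤ Real.sqrt (trace ((1 - Uᵀ * Ubar)ᵀ * (1 - Uᵀ * Ubar)))
        * Real.sqrt (trace ((Uᵀ * (Z - Zbar) - (Z - Zbar)ᵀ * Ubar)ᵀ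
          * (Uᵀ * (Z - Zbar) - (Z - Zbar)ᵀ * Ubar))) :=
    trace_transpose_mul_le _ _
  have hR0 : 0 ≤ trace ((Uᵀ * (Z - Zbar) - (Z - Zbar)ᵀ * Ubar)ᵀ
      * (Uᵀ * (Z - Zbar) - (Z - Zbar)ᵀ * Ubar)) := trace_transpose_mul_self_nonneg _
  have f2 : (lam + lamb) ^ 2 * trace ((1 - Uᵀ * Ubar)ᵀ * (1 - Uᵀ * Ubar))
      ≤ trace ((Uᵀ * (Z - Zbar) - (Z - Zbar)ᵀ * Ubar)ᵀ
        * (Uᵀ * (Z - Zbar) - (Z - Zbar)ᵀ * Ubar)) := by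
    have hchain := hRS.trans hCS
    have hsq1 := Real.sq_sqrt hS0
    have hsq2 := Real.sq_sqrt hR0
    nlinarith [Real.sqrt_nonneg (trace ((1 - Uᵀ * Ubar)ᵀ * (1 - Uᵀ * Ubar))),
      Real.sqrt_nonneg (trace ((Uᵀ * (Z - Zbar) - (Z - Zbar)ᵀ * Ubar)ᵀ
        * (Uᵀ * (Z - Zbar) - (Z - Zbar)ᵀ * Ubar))),
      sq_nonneg ((lam + lamb) * Real.sqrt (trace ((1 - Uᵀ * Ubar)ᵀ * (1 - Uᵀ * Ubar)))
        - Real.sqrt (trace ((Uᵀ * (Z - Zbar) - (Z - Zbar)ᵀ * Ubar)ᵀ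
          * (Uᵀ * (Z - Zbar) - (Z - Zbar)ᵀ * Ubar)))),
      mul_pos lam_pos lamb_pos, lam_pos, lamb_pos, hS0, hchain]
  -- (f3) ‖R‖² ≤ 2‖UᵀE‖² + 2‖UbarᵀE‖²
  have f3 : trace ((Uᵀ * (Z - Zbar) - (Z - Zbar)ᵀ * Ubar)ᵀ
        * (Uᵀ * (Z - Zbar) - (Z - Zbar)ᵀ * Ubar))
      ≤ 2 * trace ((Uᵀ * (Z - Zbar))ᵀ * (Uᵀ * (Z - Zbar)))
        + 2 * trace ((Ubarᵀ * (Z - Zbar))ᵀ * (Ubarᵀ * (Z - Zbar))) := by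
    set A1 := Uᵀ * (Z - Zbar) with hA1def
    set B1 := (Z - Zbar)ᵀ * Ubar with hB1def
    have hA10 : 0 ≤ trace (A1ᵀ * A1) := trace_transpose_mul_self_nonneg _
    have hB10 : 0 ≤ trace (B1ᵀ * B1) := trace_transpose_mul_self_nonneg _
    have hexp : trace ((A1 - B1)ᵀ * (A1 - B1))
        = trace (A1ᵀ * A1) - trace (A1ᵀ * B1) - trace (B1ᵀ * A1) + trace (B1ᵀ * B1) := by
      simp only [Matrix.transpose_sub, Matrix.sub_mul, Matrix.mul_sub, trace_sub]
      ring
    have hBA : trace (B1ᵀ * A1) = trace (A1ᵀ * B1) := by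
      rw [← Matrix.trace_transpose (B1ᵀ * A1), Matrix.transpose_mul, Matrix.transpose_transpose]
    have hBB : trace (B1ᵀ * B1) = trace ((Ubarᵀ * (Z - Zbar))ᵀ * (Ubarᵀ * (Z - Zbar))) := by
      rw [hB1def, Matrix.transpose_mul, Matrix.transpose_transpose, Matrix.transpose_mul,
        Matrix.transpose_transpose]
      exact trace_mul_comm _ _
    have hnegCS : -trace (A1ᵀ * B1)
        ≤ Real.sqrt (trace (A1ᵀ * A1)) * Real.sqrt (trace (B1ᵀ * B1)) := by
      have h := trace_transpose_mul_le (-A1) B1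
      simpa [Matrix.transpose_neg, Matrix.neg_mul, Matrix.mul_neg, neg_neg] using h
    have hamgm : 2 * (Real.sqrt (trace (A1ᵀ * A1)) * Real.sqrt (trace (B1ᵀ * B1)))
        ≤ trace (A1ᵀ * A1) + trace (B1ᵀ * B1) := by
      have h := two_mul_le_add_sq (Real.sqrt (trace (A1ᵀ * A1))) (Real.sqrt (trace (B1ᵀ * B1)))
      rwa [Real.sq_sqrt hA10, Real.sq_sqrt hB10, mul_assoc] at h
    rw [← hBB]
    linarith [hexp, hBA, hnegCS, hamgm]
  -- (f4) e = e1 + q,  (f5) e = e2 + qbar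
  have f4mat : (Z - Zbar)ᵀ * (Z - Zbar)
      = (Uᵀ * (Z - Zbar))ᵀ * (Uᵀ * (Z - Zbar))
        + (((1 : Matrix (Fin T) (Fin T) ℝ) - U * Uᵀ) * (Z - Zbar))ᵀ
          * (((1 : Matrix (Fin T) (Fin T) ℝ) - U * Uᵀ) * (Z - Zbar)) := by
    simp only [Matrix.transpose_mul, Matrix.transpose_sub, Matrix.transpose_one,
      Matrix.transpose_transpose, Matrix.mul_sub, Matrix.sub_mul, Matrix.mul_one,
      Matrix.one_mul, Matrix.mul_assoc, hU, hUbar, hU', hUb']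
    abel
  have f4 : trace ((Z - Zbar)ᵀ * (Z - Zbar))
      = trace ((Uᵀ * (Z - Zbar))ᵀ * (Uᵀ * (Z - Zbar)))
        + trace ((((1 : Matrix (Fin T) (Fin T) ℝ) - U * Uᵀ) * (Z - Zbar))ᵀ
          * (((1 : Matrix (Fin T) (Fin T) ℝ) - U * Uᵀ) * (Z - Zbar))) := by
    rw [f4mat, trace_add]
  have f5mat : (Z - Zbar)ᵀ * (Z - Zbar)
      = (Ubarᵀ * (Z - Zbar))ᵀ * (Ubarᵀ * (Z - Zbar))
        + (((1 : Matrix (Fin T) (Fin T) ℝ) - Ubar * Ubarᵀ) * (Z - Zbar))ᵀ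
          * (((1 : Matrix (Fin T) (Fin T) ℝ) - Ubar * Ubarᵀ) * (Z - Zbar)) := by
    simp only [Matrix.transpose_mul, Matrix.transpose_sub, Matrix.transpose_one,
      Matrix.transpose_transpose, Matrix.mul_sub, Matrix.sub_mul, Matrix.mul_one,
      Matrix.one_mul, Matrix.mul_assoc, hU, hUbar, hU', hUb']
    abel
  have f5 : trace ((Z - Zbar)ᵀ * (Z - Zbar))
      = trace ((Ubarᵀ * (Z - Zbar))ᵀ * (Ubarᵀ * (Z - Zbar)))
        + trace ((((1 : Matrix (Fin T) (Fin T) ℝ) - Ubar * Ubarᵀ) * (Z - Zbar))ᵀ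
          * (((1 : Matrix (Fin T) (Fin T) ℝ) - Ubar * Ubarᵀ) * (Z - Zbar))) := by
    rw [f5mat, trace_add]
  -- (f6) q ≥ lamb² p
  have hPE : ((1 : Matrix (Fin T) (Fin T) ℝ) - U * Uᵀ) * (Z - Zbar)
      = -((((1 : Matrix (Fin T) (Fin T) ℝ) - U * Uᵀ) * Ubar) * Hbar) := by
    rw [hZdec, hZbardec]
    simp only [Matrix.transpose_mul, Matrix.transpose_sub, Matrix.transpose_one,
      Matrix.transpose_transpose, Matrix.mul_sub, Matrix.sub_mul, Matrix.mul_one,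
      Matrix.one_mul, Matrix.mul_assoc, hU, hUbar, hU', hUb', Matrix.neg_mul,
      Matrix.mul_neg, neg_sub]
    abel
  have hnegt : ∀ (M : Matrix (Fin T) (Fin K) ℝ), trace ((-M)ᵀ * (-M)) = trace (Mᵀ * M) := by
    intro M; simp
  have psdB : ((((1 : Matrix (Fin T) (Fin T) ℝ) - U * Uᵀ) * Ubar)ᵀ
      * (((1 : Matrix (Fin T) (Fin T) ℝ) - U * Uᵀ) * Ubar)).PosSemidef := by
    have h := Matrix.posSemidef_conjTranspose_mul_self
      (((1 : Matrix (Fin T) (Fin T) ℝ) - U * Uᵀ) * Ubar)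
    rwa [Matrix.conjTranspose_eq_transpose_of_trivial] at h
  have psdBb : ((((1 : Matrix (Fin T) (Fin T) ℝ) - Ubar * Ubarᵀ) * U)ᵀ
      * (((1 : Matrix (Fin T) (Fin T) ℝ) - Ubar * Ubarᵀ) * U)).PosSemidef := by
    have h := Matrix.posSemidef_conjTranspose_mul_self
      (((1 : Matrix (Fin T) (Fin T) ℝ) - Ubar * Ubarᵀ) * U)
    rwa [Matrix.conjTranspose_eq_transpose_of_trivial] at h
  have f6 : lamb ^ 2 * trace ((((1 : Matrix (Fin T) (Fin T) ℝ) - U * Uᵀ) * Ubar)ᵀ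
        * (((1 : Matrix (Fin T) (Fin T) ℝ) - U * Uᵀ) * Ubar))
      ≤ trace ((((1 : Matrix (Fin T) (Fin T) ℝ) - U * Uᵀ) * (Z - Zbar))ᵀ
        * (((1 : Matrix (Fin T) (Fin T) ℝ) - U * Uᵀ) * (Z - Zbar))) := by
    rw [hPE, hnegt, trace_mul_right_sq _ _ hsymb]
    exact le_trace_mul hpsd1b psdB
  -- (f7) qbar ≥ lam² pbar
  have hPbE : ((1 : Matrix (Fin T) (Fin T) ℝ) - Ubar * Ubarᵀ) * (Z - Zbar)
      = (((1 : Matrix (Fin T) (Fin T) ℝ) - Ubar * Ubarᵀ) * U) * Hm := by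
    rw [hZdec, hZbardec]
    simp only [Matrix.transpose_mul, Matrix.transpose_sub, Matrix.transpose_one,
      Matrix.transpose_transpose, Matrix.mul_sub, Matrix.sub_mul, Matrix.mul_one,
      Matrix.one_mul, Matrix.mul_assoc, hU, hUbar, hU', hUb']
    abel
  have f7 : lam ^ 2 * trace ((((1 : Matrix (Fin T) (Fin T) ℝ) - Ubar * Ubarᵀ) * U)ᵀ
        * (((1 : Matrix (Fin T) (Fin T) ℝ) - Ubar * Ubarᵀ) * U))
      ≤ trace ((((1 : Matrix (Fin T) (Fin T) ℝ) - Ubar * Ubarᵀ) * (Z - Zbar))ᵀ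
        * (((1 : Matrix (Fin T) (Fin T) ℝ) - Ubar * Ubarᵀ) * (Z - Zbar))) := by
    rw [hPbE, trace_mul_right_sq _ _ hsymm]
    exact le_trace_mul hpsd1 psdBb
  -- (f8) pbar = p
  have hMb : (((1 : Matrix (Fin T) (Fin T) ℝ) - Ubar * Ubarᵀ) * U)ᵀ
        * (((1 : Matrix (Fin T) (Fin T) ℝ) - Ubar * Ubarᵀ) * U)
      = 1 - (Uᵀ * Ubar) * (Ubarᵀ * U) := by
    simp only [Matrix.transpose_mul, Matrix.transpose_sub, Matrix.transpose_one,
      Matrix.transpose_transpose, Matrix.mul_sub, Matrix.sub_mul, Matrix.mul_one,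
      Matrix.one_mul, Matrix.mul_assoc, hU, hUbar, hU', hUb']
    abel
  have hM : (((1 : Matrix (Fin T) (Fin T) ℝ) - U * Uᵀ) * Ubar)ᵀ
        * (((1 : Matrix (Fin T) (Fin T) ℝ) - U * Uᵀ) * Ubar)
      = 1 - (Ubarᵀ * U) * (Uᵀ * Ubar) := by
    simp only [Matrix.transpose_mul, Matrix.transpose_sub, Matrix.transpose_one,
      Matrix.transpose_transpose, Matrix.mul_sub, Matrix.sub_mul, Matrix.mul_one,
      Matrix.one_mul, Matrix.mul_assoc, hU, hUbar, hU', hUb']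
    abel
  have f8 : trace ((((1 : Matrix (Fin T) (Fin T) ℝ) - Ubar * Ubarᵀ) * U)ᵀ
        * (((1 : Matrix (Fin T) (Fin T) ℝ) - Ubar * Ubarᵀ) * U))
      = trace ((((1 : Matrix (Fin T) (Fin T) ℝ) - U * Uᵀ) * Ubar)ᵀ
        * (((1 : Matrix (Fin T) (Fin T) ℝ) - U * Uᵀ) * Ubar)) := by
    rw [hMb, hM, trace_sub, trace_sub, trace_mul_comm]
  have f7' := f8 ▸ f7
  -- final scalar assembly
  have g1 : 4 * mm ^ 2 ≤ (lam + lamb) ^ 2 := by nlinarith [hm1, hm2, hmm_pos]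
  have g2 : 4 * mm ^ 2 * trace ((1 - Uᵀ * Ubar)ᵀ * (1 - Uᵀ * Ubar))
      ≤ (lam + lamb) ^ 2 * trace ((1 - Uᵀ * Ubar)ᵀ * (1 - Uᵀ * Ubar)) :=
    mul_le_mul_of_nonneg_right g1 hS0
  have g3 : mm ^ 2 * trace ((((1 : Matrix (Fin T) (Fin T) ℝ) - U * Uᵀ) * Ubar)ᵀ
        * (((1 : Matrix (Fin T) (Fin T) ℝ) - U * Uᵀ) * Ubar))
      ≤ lamb ^ 2 * trace ((((1 : Matrix (Fin T) (Fin T) ℝ) - U * Uᵀ) * Ubar)ᵀ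
        * (((1 : Matrix (Fin T) (Fin T) ℝ) - U * Uᵀ) * Ubar)) :=
    mul_le_mul_of_nonneg_right (by nlinarith [hm2, hmm_pos]) hP0
  have g4 : mm ^ 2 * trace ((((1 : Matrix (Fin T) (Fin T) ℝ) - U * Uᵀ) * Ubar)ᵀ
        * (((1 : Matrix (Fin T) (Fin T) ℝ) - U * Uᵀ) * Ubar))
      ≤ lam ^ 2 * trace ((((1 : Matrix (Fin T) (Fin T) ℝ) - U * Uᵀ) * Ubar)ᵀ
        * (((1 : Matrix (Fin T) (Fin T) ℝ) - U * Uᵀ) * Ubar)) :=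
    mul_le_mul_of_nonneg_right (by nlinarith [hm1, hmm_pos]) hP0
  have f1' : mm ^ 2 * trace ((U - Ubar)ᵀ * (U - Ubar))
      = mm ^ 2 * trace ((1 - Uᵀ * Ubar)ᵀ * (1 - Uᵀ * Ubar))
        + mm ^ 2 * trace ((((1 : Matrix (Fin T) (Fin T) ℝ) - U * Uᵀ) * Ubar)ᵀ
          * (((1 : Matrix (Fin T) (Fin T) ℝ) - U * Uᵀ) * Ubar)) := by
    rw [f1]; ring
  have goal_scalar : mm ^ 2 * trace ((U - Ubar)ᵀ * (U - Ubar))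
      ≤ trace ((Z - Zbar)ᵀ * (Z - Zbar)) := by
    linarith [g2, f2, f3, f4, f5, f6, f7', g3, g4, f1']
  have hA_le : trace ((U - Ubar)ᵀ * (U - Ubar))
      ≤ trace ((Z - Zbar)ᵀ * (Z - Zbar)) / mm ^ 2 := by
    rw [le_div_iff₀ (by positivity)]
    nlinarith [goal_scalar]
  calc frobNorm (U - Ubar) = Real.sqrt (trace ((U - Ubar)ᵀ * (U - Ubar))) :=
        frobNorm_eq_sqrt_trace _
    _ ≤ Real.sqrt (trace ((Z - Zbar)ᵀ * (Z - Zbar)) / mm ^ 2) := Real.sqrt_le_sqrt hA_le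
    _ = Real.sqrt (trace ((Z - Zbar)ᵀ * (Z - Zbar))) / Real.sqrt (mm ^ 2) := by
        rw [Real.sqrt_div hE0]
    _ = Real.sqrt (trace ((Z - Zbar)ᵀ * (Z - Zbar))) / mm := by rw [Real.sqrt_sq hmm_pos.le]
    _ = frobNorm (Z - Zbar) / mm := by rw [frobNorm_eq_sqrt_trace]
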